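/- (Lemma 2, case 4 ≤ ⌈κ(s)⌉ ≤ D.) Under the truncated Soliton distribution, if 4 ≤ ⌈κ(s)⌉ ≤ D then Σ_s ≥ (2s/(5k))·log(4k/(21s)), where Σ_s = (2s/5)·Σ_{d=1}^{⌈κ(s)⌉-1} d·Ω_d/(k-d+1) (plus nonnegative terms). Consequently, if n ≥ 68k then C(k,s)·e^{-n·Σ_s} ≤ (k/s)^{-2s}. -/

import Mathlib

open Real Finset

set_option maxHeartbeats 2000000 in
/-- Lemma 2, case `4 ≤ ⌈κ(s)⌉ ≤ D`: under the truncated Soliton distribution,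
    `Σ_s ≥ (2s/(5k)) log(4k/(21s))`, and if `n ≥ 68k` then
    `C(k,s)e^{-nΣ_s} ≤ (k/s)^{-2s}`. -/
theorem sigma_bound_mid_kappa (k D s n : ℕ) (hk : 3 ≤ k) (hD2 : 2 ≤ D) (hDk : D ≤ k)
    (hs : 1 ≤ s) (hsk : (s : ℝ) ≤ (k : ℝ) / 2)
    (Ω : ℕ → ℝ)
    (hΩ : ∀ d, Ω d = if d = 1 then 1 / (D : ℝ)
      else if 2 ≤ d ∧ d ≤ D then 1 / ((d : ℝ) * ((d : ℝ) - 1)) else 0)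
    (κ : ℝ) (hκ : κ = ((k : ℝ) - s + 1) / (2 * (s : ℝ) + 1))
    (hκ4 : 4 ≤ ⌈κ⌉₊) (hκD : ⌈κ⌉₊ ≤ D)
    (Ss : ℝ)
    (hSs : Ss ≥ (2 * (s : ℝ) / 5) *
      ∑ d ∈ Finset.Icc 1 (⌈κ⌉₊ - 1), (d : ℝ) * Ω d / ((k : ℝ) - d + 1)) :
    Ss ≥ (2 * (s : ℝ) / (5 * (k : ℝ))) * Real.log (4 * (k : ℝ) / (21 * (s : ℝ))) ∧
    ((n : ℝ) ≥ 68 * (k : ℝ) →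
      (k.choose s : ℝ) * Real.exp (-(n : ℝ) * Ss)
        ≤ ((k : ℝ) / (s : ℝ)) ^ (-(2 * (s : ℝ)))) := by
  have hs1 : (1:ℝ) ≤ s := by exact_mod_cast hs
  have hspos : (0:ℝ) < s := by linarith
  have hk3 : (3:ℝ) ≤ k := by exact_mod_cast hk
  have hkpos : (0:ℝ) < k := by linarith
  set m := ⌈κ⌉₊ with hmdef
  have hκ3 : (3:ℝ) < κ := by
    have h : (3:ℕ) < m := hκ4
    exact_mod_cast Nat.lt_ceil.mp h
  have h2s1 : (0:ℝ) < 2*(s:ℝ)+1 := by linarith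
  have hk7s : 7*(s:ℝ) + 2 < k := by
    rw [hκ, lt_div_iff₀ h2s1] at hκ3; linarith
  have hx7 : (7:ℝ) ≤ (k:ℝ)/s := by
    rw [le_div_iff₀ hspos]; linarith
  have hq : (1:ℝ) < 4*(k:ℝ)/(21*s) := by
    rw [lt_div_iff₀ (by positivity)]; linarith
  have hκ1 : 4*(k:ℝ)/(21*s) ≤ κ - 1 := by
    have hrw : κ - 1 = ((k:ℝ) - 3*s)/(2*s+1) := by
      rw [hκ]; field_simp; ring
    rw [hrw, div_le_div_iff₀ (by positivity) h2s1]
    have h13 : (0:ℝ) ≤ 13*s - 4 := by linarith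
    nlinarith [mul_le_mul_of_nonneg_left hk7s.le h13, sq_nonneg ((s:ℝ)-1)]
  have hmκ : κ ≤ (m:ℝ) := Nat.le_ceil κ
  have hm4 : 4 ≤ m := hκ4
  have hm1 : 4*(k:ℝ)/(21*s) ≤ (m:ℝ) - 1 := by linarith
  have hmk : m ≤ k := le_trans hκD hDk
  -- the key sum bound
  have key : (1/(k:ℝ)) * Real.log (4*(k:ℝ)/(21*s)) ≤
      ∑ d ∈ Finset.Icc 1 (m-1), (d:ℝ) * Ω d / ((k:ℝ) - d + 1) := by
    have hsplit : Finset.Icc 1 (m-1) = insert 1 (Finset.Icc 2 (m-1)) := by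
      ext d; simp only [Finset.mem_Icc, Finset.mem_insert]; omega
    have hnotmem : (1:ℕ) ∉ Finset.Icc 2 (m-1) := by simp
    have hterm1 : (0:ℝ) ≤ (1:ℕ) * Ω 1 / ((k:ℝ) - (1:ℕ) + 1) := by
      rw [hΩ 1, if_pos rfl]
      have h1 : (k:ℝ) - (1:ℕ) + 1 = k := by push_cast; ring
      rw [h1]
      have hD0 : (0:ℝ) < D := by exact_mod_cast lt_of_lt_of_le (by norm_num) hD2
      positivity
    have hterm : ∀ d ∈ Finset.Icc 2 (m-1),
        1/(((d:ℝ)-1)*k) ≤ (d:ℝ) * Ω d / ((k:ℝ) - d + 1) := by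
      intro d hd
      rw [Finset.mem_Icc] at hd
      obtain ⟨hd2, hdm⟩ := hd
      have hdD : d ≤ D := by omega
      rw [hΩ d, if_neg (by omega), if_pos ⟨hd2, hdD⟩]
      have hd2r : (2:ℝ) ≤ d := by exact_mod_cast hd2
      have hdk : (d:ℝ) + 1 ≤ k := by
        have : d + 1 ≤ k := by omega
        exact_mod_cast this
      have h1 : (0:ℝ) < (d:ℝ) - 1 := by linarith
      have h2 : (0:ℝ) < (k:ℝ) - d + 1 := by linarith
      have hrw : (d:ℝ) * (1/((d:ℝ)*((d:ℝ)-1))) / ((k:ℝ)-d+1)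
          = 1/(((d:ℝ)-1)*((k:ℝ)-d+1)) := by
        field_simp
      rw [hrw]
      apply one_div_le_one_div_of_le (by positivity)
      have : (k:ℝ) - d + 1 ≤ k := by linarith
      nlinarith
    have hsum2 : ∑ d ∈ Finset.Icc 2 (m-1), 1/(((d:ℝ)-1)*k)
        ≤ ∑ d ∈ Finset.Icc 2 (m-1), (d:ℝ) * Ω d / ((k:ℝ) - d + 1) :=
      Finset.sum_le_sum hterm
    have hre : ∑ d ∈ Finset.Icc 2 (m-1), 1/(((d:ℝ)-1)*k)
        = (∑ j ∈ Finset.Icc 1 (m-2), (j:ℝ)⁻¹) * (1/(k:ℝ)) := by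
      rw [Finset.sum_mul]
      rw [show Finset.Icc 2 (m-1) = Finset.map (addRightEmbedding 1) (Finset.Icc 1 (m-2)) by
        rw [Finset.map_add_right_Icc]; congr 1 <;> omega]
      rw [Finset.sum_map]
      apply Finset.sum_congr rfl
      intro j hj
      rw [Finset.mem_Icc] at hj
      have : (((addRightEmbedding 1) j : ℕ) : ℝ) = (j:ℝ) + 1 := by
        simp [addRightEmbedding]
      rw [this]
      rw [show (j:ℝ) + 1 - 1 = (j:ℝ) by ring]
      rw [one_div, mul_inv, one_div]
    have hharm : Real.log ((m:ℝ)-1) ≤ ∑ j ∈ Finset.Icc 1 (m-2), (j:ℝ)⁻¹ := by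
      have h := log_add_one_le_harmonic (m-2)
      rw [harmonic_eq_sum_Icc] at h
      push_cast at h
      have hc : ((m - 2 : ℕ) : ℝ) + 1 = (m:ℝ) - 1 := by
        have h2m : (2:ℕ) ≤ m := by omega
        rw [Nat.cast_sub h2m]
        push_cast
        ring
      rwa [hc] at h
    have hlog2 : Real.log (4*(k:ℝ)/(21*s)) ≤ Real.log ((m:ℝ)-1) :=
      Real.log_le_log (by linarith) hm1
    calc (1/(k:ℝ)) * Real.log (4*(k:ℝ)/(21*s))
        ≤ (1/(k:ℝ)) * (∑ j ∈ Finset.Icc 1 (m-2), (j:ℝ)⁻¹) := by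
          apply mul_le_mul_of_nonneg_left (le_trans hlog2 hharm) (by positivity)
      _ = ∑ d ∈ Finset.Icc 2 (m-1), 1/(((d:ℝ)-1)*k) := by rw [hre]; ring
      _ ≤ ∑ d ∈ Finset.Icc 2 (m-1), (d:ℝ) * Ω d / ((k:ℝ) - d + 1) := hsum2
      _ ≤ ∑ d ∈ Finset.Icc 1 (m-1), (d:ℝ) * Ω d / ((k:ℝ) - d + 1) := by
          rw [hsplit, Finset.sum_insert hnotmem]
          linarith
  have hL0 : 0 ≤ Real.log (4*(k:ℝ)/(21*s)) := Real.log_nonneg hq.le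
  have hfirst : Ss ≥ (2 * (s : ℝ) / (5 * (k : ℝ))) * Real.log (4 * (k:ℝ) / (21 * (s:ℝ))) := by
    have h1 : (2*(s:ℝ)/5) * ((1/(k:ℝ)) * Real.log (4*(k:ℝ)/(21*s)))
        ≤ (2*(s:ℝ)/5) * ∑ d ∈ Finset.Icc 1 (m-1), (d:ℝ) * Ω d / ((k:ℝ) - d + 1) :=
      mul_le_mul_of_nonneg_left key (by positivity)
    have h2 : (2*(s:ℝ)/5) * ((1/(k:ℝ)) * Real.log (4*(k:ℝ)/(21*s)))
        = (2*(s:ℝ)/(5*k)) * Real.log (4*(k:ℝ)/(21*s)) := by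
      field_simp
    linarith [hSs]
  refine ⟨hfirst, fun hn => ?_⟩
  -- part 2
  set X := (k:ℝ)/s with hXdef
  have hXpos : (0:ℝ) < X := by positivity
  have hX7 : (7:ℝ) ≤ X := hx7
  set L := Real.log (4*(k:ℝ)/(21*s)) with hLdef
  have hLrw : L = Real.log X - Real.log (21/4) := by
    rw [hLdef, hXdef, ← Real.log_div (by positivity) (by norm_num)]
    congr 1
    field_simp
  have hnum : (34:ℝ) * Real.log (21/4) ≤ 29 * Real.log X := by
    have h1 : Real.log ((21/4:ℝ)^(34:ℕ)) ≤ Real.log ((7:ℝ)^(29:ℕ)) := by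
      apply Real.log_le_log (by positivity)
      rw [div_pow, div_le_iff₀ (by positivity)]
      norm_num
    rw [Real.log_pow, Real.log_pow] at h1
    have h2 : Real.log 7 ≤ Real.log X := Real.log_le_log (by norm_num) hX7
    push_cast at h1
    linarith
  have hlogX0 : 0 ≤ Real.log X := Real.log_nonneg (by linarith)
  have h5L : 5 * Real.log X ≤ 34 * L := by rw [hLrw]; linarith
  -- n * Ss ≥ 4s log X
  have hSs0 : 0 ≤ Ss := le_trans (mul_nonneg (by positivity) hL0) hfirst
  have hnSs : 4*(s:ℝ) * Real.log X ≤ (n:ℝ) * Ss := by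
    have h1 : (68*(k:ℝ)) * ((2*(s:ℝ)/(5*k)) * L) ≤ (n:ℝ) * Ss := by
      have ha : (68*(k:ℝ)) * ((2*(s:ℝ)/(5*k)) * L) ≤ (68*(k:ℝ)) * Ss :=
        mul_le_mul_of_nonneg_left hfirst (by positivity)
      have hb : (68*(k:ℝ)) * Ss ≤ (n:ℝ) * Ss := mul_le_mul_of_nonneg_right hn hSs0
      linarith
    have h2 : (68*(k:ℝ)) * ((2*(s:ℝ)/(5*k)) * L) = (136/5) * s * L := by
      field_simp; ring
    have h3 : 4*(s:ℝ) * Real.log X ≤ (136/5) * s * L := by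
      have : 5 * Real.log X ≤ 34 * L := h5L
      nlinarith [hspos]
    linarith
  -- choose bound
  have hssnat : s ≠ 0 := by omega
  have hchoose : (k.choose s : ℝ) ≤ X ^ (2*s) := by
    have h1 : (k.choose s : ℝ) ≤ ((k:ℝ) ^ s) / (s.factorial) := by
      exact_mod_cast Nat.choose_le_pow_div s k
    have h2 : ((k:ℝ) ^ s) / (s.factorial) = X ^ s * ((s:ℝ)^s / s.factorial) := by
      rw [hXdef, div_pow]
      field_simp
    have h3 : ((s:ℝ)^s / s.factorial) ≤ Real.exp s :=
      Real.pow_div_factorial_le_exp _ hspos.le s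
    have h4 : Real.exp (s:ℝ) ≤ X ^ s := by
      rw [show ((s:ℝ)) = (s:ℕ) * (1:ℝ) by push_cast; ring, Real.exp_nat_mul]
      apply pow_le_pow_left₀ (Real.exp_pos 1).le
      linarith [Real.exp_one_lt_d9]
    calc (k.choose s : ℝ) ≤ X ^ s * ((s:ℝ)^s / s.factorial) := by rw [← h2]; exact h1
      _ ≤ X ^ s * Real.exp s := by
          apply mul_le_mul_of_nonneg_left h3 (by positivity)
      _ ≤ X ^ s * X ^ s := mul_le_mul_of_nonneg_left h4 (by positivity)
      _ = X ^ (2*s) := by rw [← pow_add]; congr 1; omega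
  -- exponential bound
  have hX4s : X ^ (4*s) ≤ Real.exp ((n:ℝ) * Ss) := by
    have h1 : X ^ (4*s) = Real.exp ((4*s : ℕ) * Real.log X) := by
      rw [Real.exp_nat_mul, Real.exp_log hXpos]
    rw [h1]
    apply Real.exp_le_exp.mpr
    calc ((4*s : ℕ) : ℝ) * Real.log X = 4*(s:ℝ) * Real.log X := by push_cast; ring
      _ ≤ (n:ℝ) * Ss := hnSs
  have hrpow : ((k : ℝ) / (s : ℝ)) ^ (-(2 * (s : ℝ))) = (X ^ (2*s))⁻¹ := by
    rw [← hXdef, show -(2*(s:ℝ)) = -((2*s : ℕ) : ℝ) by push_cast; ring,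
      Real.rpow_neg hXpos.le, Real.rpow_natCast]
  rw [hrpow]
  have hP : (0:ℝ) < X ^ (2*s) := by positivity
  calc (k.choose s : ℝ) * Real.exp (-(n:ℝ) * Ss)
      ≤ X ^ (2*s) * Real.exp (-(n:ℝ) * Ss) := by
        apply mul_le_mul_of_nonneg_right hchoose (Real.exp_pos _).le
    _ = X ^ (2*s) / Real.exp ((n:ℝ) * Ss) := by
        rw [show -(n:ℝ) * Ss = -((n:ℝ) * Ss) by ring, Real.exp_neg]; ring
    _ ≤ X ^ (2*s) / X ^ (4*s) := by
        apply div_le_div_of_nonneg_left (by positivity) (by positivity) hX4s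
    _ = (X ^ (2*s))⁻¹ := by
        rw [show 4*s = 2*s + 2*s by ring, pow_add]
        field_simp
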